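/- If C_n is the cycle on n ≥ 3 vertices, then md(C_n) = ⌊n/2⌋. -/

import Mathlib

open SimpleGraph

variable {V : Type*}

/-- Color `i` separates `u` and `v`: there is an edge-cut, all of whose edges
have color `i`, whose removal disconnects `u` from `v`. -/
def separatesColor (G : SimpleGraph V) (Γ : Sym2 V → ℕ) (i : ℕ) (u v : V) : Prop :=
  ∃ F : Set (Sym2 V), F ⊆ G.edgeSet ∧ (∀ e ∈ F, Γ e = i) ∧
    ¬ ((G.deleteEdges F).Reachable u v)

/-- An MD-coloring: every pair of distinct vertices is separated by a
monochromatic edge-cut. -/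
def IsMDColoring (G : SimpleGraph V) (Γ : Sym2 V → ℕ) : Prop :=
  ∀ u v : V, u ≠ v → ∃ i, separatesColor G Γ i u v

/-- The monochromatic disconnection number: the maximum number of colors
used by an MD-coloring. -/
noncomputable def mdNumber (G : SimpleGraph V) : ℕ :=
  sSup {k | ∃ Γ : Sym2 V → ℕ, IsMDColoring G Γ ∧ (Γ '' G.edgeSet).ncard = k}

namespace MDCycleAux

open scoped Fin.CommRing Fin.NatCast

variable {n : ℕ}

lemma val_add (a b : Fin n) :
    (a + b).val = if a.val + b.val < n then a.val + b.val else a.val + b.val - n := by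
  have ha := a.isLt; have hb := b.isLt
  rw [Fin.add_def]
  show (a.val + b.val) % n = _
  split_ifs with h
  · exact Nat.mod_eq_of_lt h
  · rw [Nat.mod_eq_sub_mod (by omega), Nat.mod_eq_of_lt (by omega)]

lemma val_sub (a b : Fin n) :
    (a - b).val = if b.val ≤ a.val then a.val - b.val else a.val + n - b.val := by
  have ha := a.isLt; have hb := b.isLt
  rw [Fin.sub_def]
  show (n - b.val + a.val) % n = _
  split_ifs with h
  · rcases Nat.eq_or_lt_of_le (Nat.zero_le b.val) with hb0 | hb0
    · rw [← hb0, Nat.sub_zero, Nat.add_mod_left, Nat.mod_eq_of_lt ha]; omega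
    · rw [Nat.mod_eq_sub_mod (by omega), Nat.mod_eq_of_lt (by omega)]; omega
  · rw [Nat.mod_eq_of_lt (by omega)]; omega

lemma val_one [NeZero n] (hn : 3 ≤ n) : (1 : Fin n).val = 1 := by
  have h1 : (1 : Fin n) = ((1 : ℕ) : Fin n) := by norm_cast
  rw [h1, Fin.val_natCast, Nat.mod_eq_of_lt (by omega)]

/-- edge with index `i` in the cycle -/
def E (n : ℕ) [NeZero n] (i : Fin n) : Sym2 (Fin n) := s(i, i + 1)

lemma E_def (n : ℕ) [NeZero n] (i : Fin n) : E n i = s(i, i + 1) := rfl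

lemma succ_ne [NeZero n] (hn : 3 ≤ n) (i : Fin n) : i + 1 ≠ i := by
  intro h
  have h2 := congrArg Fin.val h
  rw [val_add, val_one hn] at h2
  have h3 := i.isLt
  split_ifs at h2 <;> omega

lemma edge_mem [NeZero n] (hn : 3 ≤ n) (i : Fin n) : E n i ∈ (cycleGraph n).edgeSet := by
  rw [E, SimpleGraph.mem_edgeSet, cycleGraph_adj']
  right
  rw [show i + 1 - i = 1 by ring, val_one hn]

lemma edge_inj [NeZero n] (hn : 3 ≤ n) {i j : Fin n} (h : E n i = E n j) : i = j := by
  rw [E, E, Sym2.eq_iff] at h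
  rcases h with ⟨h1, _⟩ | ⟨h1, h2⟩
  · exact h1
  · exfalso
    have h3 : j + 1 + 1 = j := by rw [← h1]; exact h2
    have h4 := congrArg Fin.val h3
    rw [val_add, val_add, val_one hn] at h4
    have h5 := j.isLt
    split_ifs at h4 <;> omega

lemma edge_surj [NeZero n] (hn : 3 ≤ n) {e : Sym2 (Fin n)}
    (he : e ∈ (cycleGraph n).edgeSet) : ∃ i, e = E n i := by
  induction e using Sym2.ind with
  | _ x y =>
    rw [SimpleGraph.mem_edgeSet, cycleGraph_adj'] at he
    rcases he with h | h
    · refine ⟨y, ?_⟩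
      have hx : x = y + 1 := by
        have h1 : x - y = 1 := by apply Fin.val_injective; rw [h, val_one hn]
        rw [← h1]; ring
      rw [E, hx, Sym2.eq_swap]
    · refine ⟨x, ?_⟩
      have hy : y = x + 1 := by
        have h1 : y - x = 1 := by apply Fin.val_injective; rw [h, val_one hn]
        rw [← h1]; ring
      rw [E, hy]

lemma reach_invariant {W : Type*} {G : SimpleGraph W} {P : W → Prop}
    (h : ∀ x y, G.Adj x y → (P x ↔ P y)) {u v : W} (hr : G.Reachable u v) : P u ↔ P v := by
  obtain ⟨w⟩ := hr
  induction w with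
  | nil => exact Iff.rfl
  | cons ha _ ih => exact (h _ _ ha).trans ih

/-- `x` lies in the arc `a+1, …, b`. -/
def Sside [NeZero n] (a b x : Fin n) : Prop := (x - (a + 1)).val ≤ (b - (a + 1)).val

lemma side_step [NeZero n] (hn : 3 ≤ n) (a b x : Fin n) (hxa : x ≠ a) (hxb : x ≠ b) :
    Sside a b x ↔ Sside a b (x + 1) := by
  have h1 := a.isLt; have h2 := b.isLt; have h3 := x.isLt
  have hxa' : x.val ≠ a.val := fun h => hxa (Fin.val_injective h)
  have hxb' : x.val ≠ b.val := fun h => hxb (Fin.val_injective h)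
  unfold Sside
  simp only [val_sub, val_add, val_one hn]
  split_ifs <;> omega

lemma not_reachable_side [NeZero n] (hn : 3 ≤ n) (a b u v : Fin n)
    (hu : ¬ Sside a b u) (hv : Sside a b v) :
    ¬ ((cycleGraph n).deleteEdges {E n a, E n b}).Reachable u v := by
  intro hr
  have key : ∀ x y, ((cycleGraph n).deleteEdges {E n a, E n b}).Adj x y →
      (Sside a b x ↔ Sside a b y) := by
    intro x y hxy
    rw [deleteEdges_adj] at hxy
    obtain ⟨hadj, hne⟩ := hxy
    simp only [Set.mem_insert_iff, Set.mem_singleton_iff, not_or] at hne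
    rw [cycleGraph_adj'] at hadj
    rcases hadj with h | h
    · have hx : x = y + 1 := by
        have h1 : x - y = 1 := by apply Fin.val_injective; rw [h, val_one hn]
        rw [← h1]; ring
      subst hx
      have hya : y ≠ a := by rintro rfl; exact hne.1 (by rw [E_def, Sym2.eq_swap])
      have hyb : y ≠ b := by rintro rfl; exact hne.2 (by rw [E_def, Sym2.eq_swap])
      exact (side_step hn a b y hya hyb).symm
    · have hy : y = x + 1 := by
        have h1 : y - x = 1 := by apply Fin.val_injective; rw [h, val_one hn]
        rw [← h1]; ring
      subst hy
      have hxa : x ≠ a := by rintro rfl; exact hne.1 (by rw [E_def])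
      have hxb : x ≠ b := by rintro rfl; exact hne.2 (by rw [E_def])
      exact side_step hn a b x hxa hxb
  exact hu ((reach_invariant key hr).mpr hv)

lemma reach_del_one [NeZero n] (hn : 3 ≤ n) (i u v : Fin n) :
    ((cycleGraph n).deleteEdges {E n i}).Reachable u v := by
  suffices h : ∀ t : ℕ, (ht : t < n) →
      ((cycleGraph n).deleteEdges {E n i}).Reachable (i + 1) (i + 1 + ⟨t, ht⟩) by
    have hk : ∀ w : Fin n, ((cycleGraph n).deleteEdges {E n i}).Reachable (i + 1) w := by
      intro w
      have h1 := h (w - (i + 1)).val (w - (i + 1)).isLt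
      have h2 : i + 1 + ⟨(w - (i + 1)).val, (w - (i + 1)).isLt⟩ = w := by
        rw [Fin.eta]; ring
      rwa [h2] at h1
    exact (hk u).symm.trans (hk v)
  intro t
  induction t with
  | zero =>
    intro ht
    have h0 : (⟨0, ht⟩ : Fin n) = 0 := by apply Fin.val_injective; simp
    rw [h0, add_zero]
  | succ t ih =>
    intro ht
    have htn : t < n := by omega
    have hvt : (⟨t, htn⟩ : Fin n).val = t := rfl
    have hstep : (⟨t + 1, ht⟩ : Fin n) = (⟨t, htn⟩ : Fin n) + 1 := by
      apply Fin.val_injective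
      rw [val_add, val_one hn, hvt]
      show t + 1 = _
      split_ifs <;> omega
    have hassoc : i + 1 + (⟨t + 1, ht⟩ : Fin n) = (i + 1 + ⟨t, htn⟩) + 1 := by
      rw [hstep]; ring
    refine (ih htn).trans (Adj.reachable ?_)
    rw [deleteEdges_adj]
    refine ⟨?_, ?_⟩
    · rw [cycleGraph_adj']
      right
      rw [hassoc, show (i + 1 + ⟨t, htn⟩) + 1 - (i + 1 + ⟨t, htn⟩) = 1 by ring, val_one hn]
    · simp only [Set.mem_singleton_iff]
      intro hcon
      rw [hassoc, ← E_def] at hcon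
      have h5 : i + (1 + (⟨t, htn⟩ : Fin n)) = i + 0 := by
        rw [← add_assoc, add_zero]; exact edge_inj hn hcon
      have h6 := congrArg Fin.val (add_left_cancel h5)
      rw [val_add, val_one hn, hvt, Fin.val_zero] at h6
      split_ifs at h6 <;> omega

open Classical in
/-- The lower-bound coloring: edge `i` gets color `i % (n/2)`. -/
noncomputable def Γ₀ (n : ℕ) [NeZero n] : Sym2 (Fin n) → ℕ :=
  fun e => if h : ∃ i, e = E n i then (Classical.choose h).val % (n / 2) else 0

lemma Γ₀_edge [NeZero n] (hn : 3 ≤ n) (i : Fin n) : Γ₀ n (E n i) = i.val % (n / 2) := by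
  have h : ∃ j, E n i = E n j := ⟨i, rfl⟩
  rw [Γ₀, dif_pos h]
  congr 2
  exact (edge_inj hn h.choose_spec).symm

lemma sep [NeZero n] (hn : 3 ≤ n) (u v : Fin n) (hd1 : 1 ≤ (v - u).val)
    (hdk : (v - u).val ≤ n / 2) :
    separatesColor (cycleGraph n) (Γ₀ n) (u.val % (n / 2)) u v := by
  have hk1 : 1 ≤ n / 2 := by omega
  have hu := u.isLt; have hv := v.isLt
  have hwlt : (if u.val + n / 2 < n then u.val + n / 2 else u.val - n / 2) < n := by
    split_ifs <;> omega
  set w : Fin n := ⟨_, hwlt⟩ with hw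
  have hwval : w.val = if u.val + n / 2 < n then u.val + n / 2 else u.val - n / 2 := rfl
  refine ⟨{E n u, E n w}, ?_, ?_, ?_⟩
  · intro e he
    rcases he with rfl | rfl
    · exact edge_mem hn u
    · exact edge_mem hn w
  · intro e he
    rcases he with rfl | rfl
    · rw [Γ₀_edge hn]
    · rw [Γ₀_edge hn, hwval]
      split_ifs with h
      · rw [Nat.add_mod_right]
      · have h2 : n / 2 ≤ u.val := by omega
        conv_rhs => rw [← Nat.sub_add_cancel h2, Nat.add_mod_right]
  · have hnsu : ¬ Sside u w u := by
      rw [val_sub] at hd1 hdk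
      simp only [Sside, val_sub, val_add, val_one hn, hwval]
      split_ifs at * <;> omega
    have hsv : Sside u w v := by
      rw [val_sub] at hd1 hdk
      simp only [Sside, val_sub, val_add, val_one hn, hwval]
      split_ifs at * <;> omega
    exact not_reachable_side hn u w u v hnsu hsv

lemma md₀ [NeZero n] (hn : 3 ≤ n) : IsMDColoring (cycleGraph n) (Γ₀ n) := by
  intro u v huv
  have hne : u.val ≠ v.val := fun h => huv (Fin.val_injective h)
  have hu := u.isLt; have hv := v.isLt
  have h1 : (v - u).val + (u - v).val = n ∧ 1 ≤ (v - u).val := by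
    rw [val_sub, val_sub]
    split_ifs <;> omega
  rcases le_or_gt (v - u).val (n / 2) with h | h
  · exact ⟨u.val % (n / 2), sep hn u v h1.2 h⟩
  · refine ⟨v.val % (n / 2), ?_⟩
    have h2 : 1 ≤ (u - v).val := by omega
    have h3 : (u - v).val ≤ n / 2 := by omega
    obtain ⟨F, hF1, hF2, hF3⟩ := sep hn v u h2 h3
    exact ⟨F, hF1, hF2, fun hr => hF3 hr.symm⟩

lemma img₀ [NeZero n] (hn : 3 ≤ n) :
    (Γ₀ n '' (cycleGraph n).edgeSet).ncard = n / 2 := by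
  have hset : Γ₀ n '' (cycleGraph n).edgeSet = ↑(Finset.range (n / 2)) := by
    ext c
    simp only [Set.mem_image, Finset.coe_range, Set.mem_Iio]
    constructor
    · rintro ⟨e, he, rfl⟩
      obtain ⟨i, rfl⟩ := edge_surj hn he
      rw [Γ₀_edge hn]
      exact Nat.mod_lt _ (by omega)
    · intro hc
      refine ⟨E n ⟨c, by omega⟩, edge_mem hn _, ?_⟩
      rw [Γ₀_edge hn]
      exact Nat.mod_eq_of_lt hc
  rw [hset, Set.ncard_coe_finset, Finset.card_range]

lemma double [NeZero n] (hn : 3 ≤ n) {Γ : Sym2 (Fin n) → ℕ}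
    (hΓ : IsMDColoring (cycleGraph n) Γ) :
    ∀ e ∈ (cycleGraph n).edgeSet, ∃ e' ∈ (cycleGraph n).edgeSet, e' ≠ e ∧ Γ e' = Γ e := by
  intro e he
  obtain ⟨i, rfl⟩ := edge_surj hn he
  obtain ⟨c0, F, hF1, hF2, hF3⟩ := hΓ i (i + 1) (succ_ne hn i).symm
  have heF : E n i ∈ F := by
    by_contra hek
    refine hF3 (Adj.reachable ?_)
    rw [deleteEdges_adj]
    exact ⟨(SimpleGraph.mem_edgeSet _).mp (edge_mem hn i), hek⟩
  obtain ⟨e', he'F, he'ne⟩ : ∃ e' ∈ F, e' ≠ E n i := by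
    by_contra hcon
    push_neg at hcon
    have hsub : F ⊆ {E n i} := fun x hx => hcon x hx
    have hle : ((cycleGraph n).deleteEdges {E n i}) ≤ (cycleGraph n).deleteEdges F :=
      SimpleGraph.deleteEdges_anti hsub
    exact hF3 ((reach_del_one hn i i (i + 1)).mono hle)
  exact ⟨e', hF1 he'F, he'ne, by rw [hF2 e' he'F, hF2 _ heF]⟩

lemma count_le {α β : Type*} [DecidableEq α] [DecidableEq β] (s : Finset α) (f : α → β)
    (h : ∀ x ∈ s, ∃ y ∈ s, y ≠ x ∧ f y = f x) : 2 * (s.image f).card ≤ s.card := by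
  rw [Finset.card_eq_sum_card_fiberwise (fun x hx => Finset.mem_image_of_mem f hx)]
  have hfib : ∀ b ∈ s.image f, 2 ≤ (s.filter (fun a => f a = b)).card := by
    intro b hb
    obtain ⟨x, hx, rfl⟩ := Finset.mem_image.mp hb
    obtain ⟨y, hy, hyx, hfy⟩ := h x hx
    calc 2 = ({y, x} : Finset α).card := (Finset.card_pair hyx).symm
      _ ≤ _ := by
        apply Finset.card_le_card
        intro z hz
        rcases Finset.mem_insert.mp hz with rfl | hz'
        · exact Finset.mem_filter.mpr ⟨hy, hfy⟩
        · rw [Finset.mem_singleton.mp hz']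
          exact Finset.mem_filter.mpr ⟨hx, rfl⟩
  calc 2 * (s.image f).card = ∑ _b ∈ s.image f, 2 := by
        rw [Finset.sum_const, smul_eq_mul, mul_comm]
    _ ≤ _ := Finset.sum_le_sum hfib

lemma edge_count [NeZero n] (hn : 3 ≤ n) : (cycleGraph n).edgeSet.toFinset.card = n := by
  have hrange : (cycleGraph n).edgeSet = Set.range (E n) :=
    Set.ext fun e => ⟨fun he => ((edge_surj hn he).imp fun i h => h.symm),
      by rintro ⟨i, rfl⟩; exact edge_mem hn i⟩
  rw [Set.toFinset_congr hrange, Set.toFinset_range, Finset.card_image_of_injective _ (fun i j => edge_inj hn),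
    Finset.card_univ, Fintype.card_fin]

lemma ub [NeZero n] (hn : 3 ≤ n) {Γ : Sym2 (Fin n) → ℕ}
    (hΓ : IsMDColoring (cycleGraph n) Γ) :
    (Γ '' (cycleGraph n).edgeSet).ncard ≤ n / 2 := by
  classical
  have hd := double hn hΓ
  have h1 : (Γ '' (cycleGraph n).edgeSet).toFinset = (cycleGraph n).edgeSet.toFinset.image Γ :=
    Set.toFinset_image _ _
  rw [Set.ncard_eq_toFinset_card', h1]
  have h2 := count_le (cycleGraph n).edgeSet.toFinset Γ (by
    intro x hx
    rw [Set.mem_toFinset] at hx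
    obtain ⟨y, hy, h3, h4⟩ := hd x hx
    exact ⟨y, Set.mem_toFinset.mpr hy, h3, h4⟩)
  rw [edge_count hn] at h2
  omega

end MDCycleAux

/-- The cycle on `n ≥ 3` vertices has `md(Cₙ) = ⌊n / 2⌋`. -/
theorem stmt_5 (n : ℕ) (hn : 3 ≤ n) :
    mdNumber (SimpleGraph.cycleGraph n) = n / 2 := by
  haveI : NeZero n := ⟨by omega⟩
  apply le_antisymm
  · apply csSup_le'
    rintro k ⟨Γ, hΓ, rfl⟩
    exact MDCycleAux.ub hn hΓ
  · apply le_csSup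
    · exact ⟨n / 2, by rintro k ⟨Γ, hΓ, rfl⟩; exact MDCycleAux.ub hn hΓ⟩
    · exact ⟨MDCycleAux.Γ₀ n, MDCycleAux.md₀ hn, MDCycleAux.img₀ hn⟩
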